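/- Let λ ∈ ℝ and let K : (0,∞) → ℝ be continuous and integrable on (0,T] for every T > 0. Suppose that for all 0 < t < T one has ∫₀ᵀ K(s) ds = e^{−λ(T−t)} ∫₀ᵗ K(s) ds + ∫₀^{T−t} K(s) ds. Then the limit c := lim_{t→0⁺} K(t) exists in ℝ and K(t) = c e^{−λt} for all t > 0. -/

import Mathlib

open MeasureTheory Set Filter intervalIntegral

/-- Case 1 (β = 0, b₀ ≠ 0) of the affine-drift theorem: the additive functional
equation forced on the kernel implies that it is an exponential. -/
theorem stmt_1 (lam : ℝ) (K : ℝ → ℝ)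
    (hKc : ContinuousOn K (Set.Ioi 0))
    (hKint : ∀ T > 0, MeasureTheory.IntegrableOn K (Set.Ioc 0 T))
    (hfun : ∀ t T : ℝ, 0 < t → t < T →
      (∫ s in (0:ℝ)..T, K s)
        = Real.exp (-lam * (T - t)) * (∫ s in (0:ℝ)..t, K s)
          + ∫ s in (0:ℝ)..(T - t), K s) :
    ∃ c : ℝ, Filter.Tendsto K (nhdsWithin 0 (Set.Ioi 0)) (nhds c) ∧
      ∀ t > 0, K t = c * Real.exp (-lam * t) := by
  set F : ℝ → ℝ := fun x => ∫ s in (0:ℝ)..x, K s with hFdef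
  have hderiv : ∀ t : ℝ, 0 < t → HasDerivAt F (K t) t := by
    intro t ht
    apply intervalIntegral.integral_hasDerivAt_right
    · rw [intervalIntegrable_iff]
      have : Set.uIoc (0:ℝ) t = Set.Ioc 0 t := Set.uIoc_of_le ht.le
      rw [this]
      exact hKint t ht
    · exact ⟨Set.Ioi 0, Ioi_mem_nhds ht, hKc.aestronglyMeasurable measurableSet_Ioi⟩
    · exact hKc.continuousAt (Ioi_mem_nhds ht)
  have hkey : ∀ u : ℝ, 0 < u → ∀ t : ℝ, 0 < t →
      K (t + u) = Real.exp (-lam * u) * K t := by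
    intro u hu t ht
    have hg : HasDerivAt (fun x => F (x + u)) (K (t + u)) t := by
      have := (hderiv (t + u) (by linarith)).comp t ((hasDerivAt_id t).add_const u)
      simpa [Function.comp_def] using this
    have hh : HasDerivAt (fun x => Real.exp (-lam * u) * F x + F u)
        (Real.exp (-lam * u) * K t) t :=
      ((hderiv t ht).const_mul _).add_const (F u)
    have heq : (fun x => F (x + u)) =ᶠ[nhds t]
        (fun x => Real.exp (-lam * u) * F x + F u) := by
      filter_upwards [Ioi_mem_nhds ht] with x hx
      have := hfun x (x + u) hx (by linarith [mem_Ioi.mp hx])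
      simpa using this
    exact (hg.congr_of_eventuallyEq heq.symm).unique hh
  have hval : ∀ t : ℝ, 0 < t → K t = (K 1 * Real.exp lam) * Real.exp (-lam * t) := by
    intro t ht
    have h1 := hkey 1 one_pos t ht
    have h2 := hkey t ht 1 one_pos
    rw [show (1:ℝ) + t = t + 1 by ring] at h2
    have hne : Real.exp (-lam * 1) ≠ 0 := Real.exp_ne_zero _
    have : Real.exp (-lam * 1) * K t = Real.exp (-lam * t) * K 1 := by
      rw [← h1, h2]
    have h0 : Real.exp (-lam * 1) * Real.exp lam = 1 := by
      rw [← Real.exp_add]; norm_num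
    have hR : Real.exp (-lam * 1) * (K 1 * Real.exp lam * Real.exp (-lam * t))
        = Real.exp (-lam * t) * K 1 := by
      calc Real.exp (-lam * 1) * (K 1 * Real.exp lam * Real.exp (-lam * t))
          = (Real.exp (-lam * 1) * Real.exp lam) * (K 1 * Real.exp (-lam * t)) := by ring
        _ = Real.exp (-lam * t) * K 1 := by rw [h0]; ring
    exact mul_left_cancel₀ hne (this.trans hR.symm)
  refine ⟨K 1 * Real.exp lam, ?_, hval⟩
  have htend : Filter.Tendsto (fun t => (K 1 * Real.exp lam) * Real.exp (-lam * t))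
      (nhdsWithin 0 (Set.Ioi 0)) (nhds (K 1 * Real.exp lam)) := by
    have : Continuous (fun t : ℝ => (K 1 * Real.exp lam) * Real.exp (-lam * t)) :=
      continuous_const.mul (Real.continuous_exp.comp (continuous_const.mul continuous_id))
    have h0 := (this.tendsto 0).mono_left (nhdsWithin_le_nhds (s := Set.Ioi 0))
    simpa using h0
  apply htend.congr'
  filter_upwards [self_mem_nhdsWithin] with x hx
  exact (hval x hx).symm
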